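/- Let P(X) = p_d X^d + p_{d-1}X^{d-1} + ⋯ + p_1 X + p_0 ∈ ℤ[X] with p_0 ≥ 2 and p_d ≠ 0, let 𝓡 = ℤ[X]/P(X)ℤ[X] with x the image of X, and set r = (p_d/p_0, p_{d-1}/p_0, …, p_1/p_0) ∈ ℝ^d. Then every element B of 𝓡 admits a representation B = b_0 + b_1 x + ⋯ + b_ℓ x^ℓ with all digits b_i ∈ {0,1,…,p_0−1} (i.e., P is a CNS polynomial with digit set {0,…,p_0−1}) if and only if r ∈ D_d^{(0)}, i.e., for every z ∈ ℤ^d there exists k ∈ ℕ with τ_r^k(z) = 0. -/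

import Mathlib

open Polynomial

/-- The shift radix system `τ_r : ℤ^d → ℤ^d`. -/
noncomputable def srsMap (d : ℕ) (r : Fin d → ℝ) (z : Fin d → ℤ) : Fin d → ℤ :=
  fun i =>
    if h : (i : ℕ) + 1 < d then z ⟨(i : ℕ) + 1, h⟩
    else -⌊∑ j, r j * (z j : ℝ)⌋

/-- The polynomial `P(X) = p_d X^d + ⋯ + p_1 X + p_0`. -/
noncomputable def cnsPoly (d : ℕ) (p : Fin (d + 1) → ℤ) : Polynomial ℤ :=
  ∑ j : Fin (d + 1), C (p j) * X ^ (j : ℕ)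

/-- The ring `𝓡 = ℤ[X]/P(X)ℤ[X]`. -/
abbrev CnsRing (d : ℕ) (p : Fin (d + 1) → ℤ) :=
  Polynomial ℤ ⧸ Ideal.span {cnsPoly d p}

/-- The image `x` of `X` in `𝓡`. -/
noncomputable def cnsX (d : ℕ) (p : Fin (d + 1) → ℤ) : CnsRing d p :=
  Ideal.Quotient.mk _ X

namespace CnsSrs

variable (d : ℕ) (p : Fin (d + 1) → ℤ)

/-- `p` extended to `ℕ` by zero. -/
def pext (n : ℕ) : ℤ := if h : n < d + 1 then p ⟨n, h⟩ else 0

/-- a vector extended to `ℕ` by zero. -/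
def zext (z : Fin d → ℤ) (n : ℕ) : ℤ := if h : n < d then z ⟨n, h⟩ else 0

/-- Coefficients of the conjugating map `Λ`. -/
def lamCoeff (z : Fin d → ℤ) (i : ℕ) : ℤ :=
  ∑ t ∈ Finset.range (d - i), pext d p (d - t) * zext d z (i + t)

/-- The conjugating map `Λ : ℤ^d → 𝓡`. -/
noncomputable def Lr (z : Fin d → ℤ) : CnsRing d p :=
  ∑ i ∈ Finset.range d, ((lamCoeff d p z i : ℤ) : CnsRing d p) * cnsX d p ^ i

/-- The abstract shift map with prescribed last entry `-q`. -/
def sigmaMap (q : ℤ) (z : Fin d → ℤ) : Fin d → ℤ :=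
  fun i => if h : (i : ℕ) + 1 < d then z ⟨(i : ℕ) + 1, h⟩ else -q

/-- prepend a digit -/
def digCons (a : ℤ) (g : ℕ → ℤ) : ℕ → ℤ
  | 0 => a
  | i + 1 => g i

theorem mk_C (a : ℤ) :
    Ideal.Quotient.mk (Ideal.span {cnsPoly d p}) (C a) = (a : CnsRing d p) := by
  have h := map_intCast (Ideal.Quotient.mk (Ideal.span {cnsPoly d p})) a
  rwa [show ((a : Polynomial ℤ)) = C a by norm_cast] at h

theorem cnsPoly_eq : cnsPoly d p = ∑ j ∈ Finset.range (d + 1), C (pext d p j) * X ^ j := by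
  rw [cnsPoly, ← Fin.sum_univ_eq_sum_range (fun j => C (pext d p j) * X ^ j) (d + 1)]
  refine Finset.sum_congr rfl fun j _ => ?_
  rw [pext, dif_pos j.isLt, Fin.eta]

theorem coeff_cnsPoly (n : ℕ) : (cnsPoly d p).coeff n = pext d p n := by
  rw [cnsPoly_eq, Polynomial.finset_sum_coeff]
  simp only [coeff_C_mul, coeff_X_pow, mul_ite, mul_one, mul_zero]
  rw [Finset.sum_ite_eq (Finset.range (d + 1)) n (pext d p)]
  by_cases h : n < d + 1
  · rw [if_pos (Finset.mem_range.mpr h)]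
  · rw [if_neg (fun hc => h (Finset.mem_range.mp hc)), pext, dif_neg h]

theorem coeff_cnsPoly_d : (cnsPoly d p).coeff d = p (Fin.last d) := by
  rw [coeff_cnsPoly, pext, dif_pos (Nat.lt_succ_self d)]
  rfl

theorem natDegree_cnsPoly_le : (cnsPoly d p).natDegree ≤ d := by
  apply Polynomial.natDegree_le_iff_coeff_eq_zero.mpr
  intro m hm
  rw [coeff_cnsPoly, pext, dif_neg (by omega)]

variable (hpd : p (Fin.last d) ≠ 0)

include hpd in
theorem cnsPoly_ne_zero : cnsPoly d p ≠ 0 := by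
  intro h
  apply hpd
  rw [← coeff_cnsPoly_d d p, h, Polynomial.coeff_zero]

include hpd in
theorem natDegree_cnsPoly : (cnsPoly d p).natDegree = d :=
  le_antisymm (natDegree_cnsPoly_le d p)
    (Polynomial.le_natDegree_of_ne_zero (by rw [coeff_cnsPoly_d]; exact hpd))

include hpd in
theorem small_inj (f : Polynomial ℤ) (hf : f.natDegree < d)
    (h0 : Ideal.Quotient.mk (Ideal.span {cnsPoly d p}) f = 0) : f = 0 := by
  rw [Ideal.Quotient.eq_zero_iff_mem, Ideal.mem_span_singleton] at h0
  obtain ⟨h, rfl⟩ := h0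
  rcases eq_or_ne h 0 with rfl | hne
  · exact mul_zero _
  · exfalso
    rw [Polynomial.natDegree_mul (cnsPoly_ne_zero d p hpd) hne,
      natDegree_cnsPoly d p hpd] at hf
    omega

theorem rel_sum : ∑ j ∈ Finset.range (d + 1),
    ((pext d p j : ℤ) : CnsRing d p) * cnsX d p ^ j = 0 := by
  have h : Ideal.Quotient.mk (Ideal.span {cnsPoly d p})
      (∑ j ∈ Finset.range (d + 1), C (pext d p j) * X ^ j) = 0 := by
    rw [← cnsPoly_eq]
    exact Ideal.Quotient.eq_zero_iff_mem.mpr (Ideal.mem_span_singleton_self _)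
  rw [map_sum] at h
  rw [← h]
  refine Finset.sum_congr rfl fun j _ => ?_
  rw [map_mul, map_pow, mk_C]
  rfl

theorem zext_sigma (q : ℤ) (z : Fin d → ℤ) (n : ℕ) (hn : n + 1 < d) :
    zext d (sigmaMap d q z) n = zext d z (n + 1) := by
  rw [zext, zext, dif_pos (by omega : n < d), dif_pos hn, sigmaMap]
  simp only [dif_pos hn]

theorem zext_sigma_last (q : ℤ) (z : Fin d → ℤ) (hd : 1 ≤ d) :
    zext d (sigmaMap d q z) (d - 1) = -q := by
  rw [zext, dif_pos (by omega : d - 1 < d), sigmaMap]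
  simp only [dif_neg (by omega : ¬ (d - 1) + 1 < d)]

theorem lamCoeff_sigma (q : ℤ) (z : Fin d → ℤ) (i : ℕ) (hi : i < d) :
    lamCoeff d p (sigmaMap d q z) i = lamCoeff d p z (i + 1) - q * pext d p (i + 1) := by
  rw [lamCoeff, lamCoeff]
  rw [show d - i = (d - (i + 1)) + 1 by omega, Finset.sum_range_succ]
  have h1 : ∀ t ∈ Finset.range (d - (i + 1)),
      pext d p (d - t) * zext d (sigmaMap d q z) (i + t)
        = pext d p (d - t) * zext d z (i + 1 + t) := by
    intro t ht
    rw [Finset.mem_range] at ht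
    rw [zext_sigma d q z (i + t) (by omega)]
    ring_nf
  rw [Finset.sum_congr rfl h1]
  rw [show i + (d - (i + 1)) = d - 1 by omega, zext_sigma_last d q z (by omega),
    show d - (d - (i + 1)) = i + 1 by omega]
  ring

theorem floor_intCast_div (a b : ℤ) (hb : 0 < b) : ⌊(a : ℝ) / (b : ℝ)⌋ = a / b := by
  have h1 : b * (a / b) + a % b = a := Int.mul_ediv_add_emod a b
  have h2 : 0 ≤ a % b := Int.emod_nonneg a (ne_of_gt hb)
  have h3 : a % b < b := Int.emod_lt_of_pos a hb
  rw [Int.floor_eq_iff]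
  constructor
  · rw [le_div_iff₀ (by exact_mod_cast hb)]
    have : (a / b) * b ≤ a := by nlinarith
    exact_mod_cast this
  · rw [div_lt_iff₀ (by exact_mod_cast hb)]
    have : a < (a / b + 1) * b := by nlinarith
    exact_mod_cast this

theorem srs_eq_sigma (hp0 : 2 ≤ p 0) (r : Fin d → ℝ)
    (hr : ∀ j : Fin d, r j = (p ⟨d - (j : ℕ), Nat.lt_succ_of_le (Nat.sub_le _ _)⟩ : ℝ) / (p 0 : ℝ))
    (z : Fin d → ℤ) :
    srsMap d r z = sigmaMap d (lamCoeff d p z 0 / p 0) z := by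
  funext i
  rw [srsMap, sigmaMap]
  by_cases h : (i : ℕ) + 1 < d
  · rw [dif_pos h, dif_pos h]
  · rw [dif_neg h, dif_neg h]
    congr 1
    have hsum : ∑ j, r j * ((z j : ℤ) : ℝ) = (lamCoeff d p z 0 : ℝ) / (p 0 : ℝ) := by
      rw [lamCoeff, Nat.sub_zero]
      push_cast
      rw [Finset.sum_div, ← Fin.sum_univ_eq_sum_range
        (fun t => ((pext d p (d - t) : ℝ) * (zext d z (0 + t) : ℝ)) / (p 0 : ℝ)) d]
      refine Finset.sum_congr rfl fun j _ => ?_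
      rw [hr j, zext, dif_pos (by omega : 0 + (j : ℕ) < d), pext,
        dif_pos (by omega : d - (j : ℕ) < d + 1)]
      rw [show (⟨0 + (j : ℕ), by omega⟩ : Fin d) = j by ext; simp]
      rw [div_mul_eq_mul_div]
    rw [hsum, floor_intCast_div _ _ (by omega)]

theorem lamCoeff_d (z : Fin d → ℤ) : lamCoeff d p z d = 0 := by
  rw [lamCoeff]; simp

theorem hsum0 (z : Fin d → ℤ) :
    ∑ i ∈ Finset.range (d + 1), ((lamCoeff d p z i : ℤ) : CnsRing d p) * cnsX d p ^ i
      = Lr d p z := by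
  rw [Finset.sum_range_succ, lamCoeff_d, Lr]
  simp

theorem genstep (c : ℤ) (z : Fin d → ℤ) :
    ((c : ℤ) : CnsRing d p) + Lr d p z
      = (((c + lamCoeff d p z 0) % p 0 : ℤ) : CnsRing d p)
        + cnsX d p * Lr d p (sigmaMap d ((c + lamCoeff d p z 0) / p 0) z) := by
  have hp0' : (0:ℤ) ≤ 0 ∨ True := Or.inr trivial
  set q := (c + lamCoeff d p z 0) / p 0 with hq
  have h1 : Lr d p (sigmaMap d q z)
      = ∑ i ∈ Finset.range d,
          ((lamCoeff d p z (i + 1) - q * pext d p (i + 1) : ℤ) : CnsRing d p)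
            * cnsX d p ^ i := by
    rw [Lr]
    exact Finset.sum_congr rfl fun i hi => by
      rw [lamCoeff_sigma d p q z i (Finset.mem_range.mp hi)]
  have hA : ∑ i ∈ Finset.range d,
      ((lamCoeff d p z (i + 1) : ℤ) : CnsRing d p) * cnsX d p ^ (i + 1)
        = Lr d p z - ((lamCoeff d p z 0 : ℤ) : CnsRing d p) := by
    have h := Finset.sum_range_succ'
      (fun i => ((lamCoeff d p z i : ℤ) : CnsRing d p) * cnsX d p ^ i) d
    rw [hsum0] at h
    simp only [pow_zero, mul_one] at h
    linear_combination -h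
  have hB : ∑ i ∈ Finset.range d,
      ((pext d p (i + 1) : ℤ) : CnsRing d p) * cnsX d p ^ (i + 1)
        = -((p 0 : ℤ) : CnsRing d p) := by
    have h := Finset.sum_range_succ'
      (fun j => ((pext d p j : ℤ) : CnsRing d p) * cnsX d p ^ j) d
    rw [rel_sum d p] at h
    simp only [pow_zero, mul_one] at h
    have hpe : pext d p 0 = p 0 := by
      rw [pext, dif_pos (by omega : 0 < d + 1)]
      exact congrArg p (by ext; simp)
    rw [hpe] at h
    linear_combination -h
  have expand : cnsX d p * Lr d p (sigmaMap d q z)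
      = (∑ i ∈ Finset.range d,
          ((lamCoeff d p z (i + 1) : ℤ) : CnsRing d p) * cnsX d p ^ (i + 1))
        - (q : CnsRing d p)
          * ∑ i ∈ Finset.range d,
              ((pext d p (i + 1) : ℤ) : CnsRing d p) * cnsX d p ^ (i + 1) := by
    rw [h1, Finset.mul_sum, Finset.mul_sum, ← Finset.sum_sub_distrib]
    refine Finset.sum_congr rfl fun i _ => ?_
    push_cast
    ring
  have hint : (c : ℤ) = ((c + lamCoeff d p z 0) % p 0) + q * p 0 - lamCoeff d p z 0 := by
    have h := Int.emod_add_mul_ediv (c + lamCoeff d p z 0) (p 0)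
    rw [hq]
    linear_combination -h
  have hcast : ((c : ℤ) : CnsRing d p)
      = (((c + lamCoeff d p z 0) % p 0 : ℤ) : CnsRing d p)
        + (q : CnsRing d p) * ((p 0 : ℤ) : CnsRing d p)
        - ((lamCoeff d p z 0 : ℤ) : CnsRing d p) := by
    have h := congrArg (fun t : ℤ => ((t : ℤ) : CnsRing d p)) hint
    push_cast at h
    push_cast
    exact h
  rw [expand, hA, hB]
  linear_combination hcast

theorem x_mul_cancel (hp0 : 2 ≤ p 0) (A B : CnsRing d p)
    (h : cnsX d p * A = cnsX d p * B) : A = B := by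
  obtain ⟨f, rfl⟩ := Ideal.Quotient.mk_surjective A
  obtain ⟨g, rfl⟩ := Ideal.Quotient.mk_surjective B
  have h2 : Ideal.Quotient.mk (Ideal.span {cnsPoly d p}) (X * f - X * g) = 0 := by
    rw [map_sub, map_mul, map_mul]
    show cnsX d p * _ - cnsX d p * _ = 0
    rw [h, sub_self]
  rw [Ideal.Quotient.eq_zero_iff_mem, Ideal.mem_span_singleton] at h2
  obtain ⟨h', hh⟩ := h2
  have hX : X ∣ cnsPoly d p * h' := ⟨f - g, by rw [← hh]; ring⟩
  have hXP : ¬ (X ∣ cnsPoly d p) := by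
    rw [Polynomial.X_dvd_iff, coeff_cnsPoly, pext, dif_pos (by omega : 0 < d + 1)]
    intro hc
    have : p ⟨0, by omega⟩ = p 0 := congrArg p (by ext; simp)
    omega
  have hXh : X ∣ h' := ((Polynomial.prime_X).dvd_mul.mp hX).resolve_left hXP
  obtain ⟨h'', rfl⟩ := hXh
  have hfg : f - g = cnsPoly d p * h'' := by
    have hXne : (X : Polynomial ℤ) ≠ 0 := Polynomial.X_ne_zero
    apply mul_left_cancel₀ hXne
    rw [show X * (f - g) = X * f - X * g by ring, hh]
    ring
  rw [Ideal.Quotient.eq]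
  rw [Ideal.mem_span_singleton]
  exact ⟨h'', hfg⟩

theorem int_dvd_of_eq_x_mul (n : ℤ) (A : CnsRing d p)
    (h : ((n : ℤ) : CnsRing d p) = cnsX d p * A) : p 0 ∣ n := by
  obtain ⟨g, rfl⟩ := Ideal.Quotient.mk_surjective A
  have h2 : Ideal.Quotient.mk (Ideal.span {cnsPoly d p}) (C n - X * g) = 0 := by
    rw [map_sub, map_mul, mk_C]
    show _ - cnsX d p * _ = 0
    rw [← h, sub_self]
  rw [Ideal.Quotient.eq_zero_iff_mem, Ideal.mem_span_singleton] at h2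
  obtain ⟨h', hh⟩ := h2
  have hc := congrArg (fun f => Polynomial.coeff f 0) hh
  simp only [Polynomial.coeff_sub, Polynomial.coeff_C_zero, Polynomial.mul_coeff_zero,
    Polynomial.coeff_X_zero, zero_mul, sub_zero, coeff_cnsPoly] at hc
  rw [pext, dif_pos (by omega : 0 < d + 1)] at hc
  have hpe : p ⟨0, by omega⟩ = p 0 := congrArg p (by ext; simp)
  exact ⟨h'.coeff 0, by rw [hc, hpe]⟩

theorem digit_unique (hp0 : 2 ≤ p 0) (a a' : ℤ) (A A' : CnsRing d p)
    (ha1 : 0 ≤ a) (ha2 : a < p 0) (ha1' : 0 ≤ a') (ha2' : a' < p 0)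
    (h : ((a : ℤ) : CnsRing d p) + cnsX d p * A = ((a' : ℤ) : CnsRing d p) + cnsX d p * A') :
    a = a' ∧ A = A' := by
  have h1 : ((a - a' : ℤ) : CnsRing d p) = cnsX d p * (A' - A) := by
    push_cast
    linear_combination h
  have h2 : p 0 ∣ a - a' := int_dvd_of_eq_x_mul d p (a - a') (A' - A) h1
  have h3 : a = a' := by
    rcases h2 with ⟨m, hm⟩
    rcases lt_trichotomy m 0 with hlt | rfl | hgt
    · nlinarith
    · omega
    · nlinarith
  subst h3
  refine ⟨rfl, x_mul_cancel d p hp0 A A' ?_⟩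
  exact add_left_cancel h

/-- polynomial representative of `Λ z`. -/
noncomputable def lamPoly (z : Fin d → ℤ) : Polynomial ℤ :=
  ∑ i ∈ Finset.range d, C (lamCoeff d p z i) * X ^ i

theorem mk_lamPoly (z : Fin d → ℤ) :
    Ideal.Quotient.mk (Ideal.span {cnsPoly d p}) (lamPoly d p z) = Lr d p z := by
  rw [lamPoly, map_sum, Lr]
  refine Finset.sum_congr rfl fun i _ => ?_
  rw [map_mul, map_pow, mk_C]
  rfl

theorem coeff_lamPoly (z : Fin d → ℤ) (n : ℕ) (hn : n < d) :
    (lamPoly d p z).coeff n = lamCoeff d p z n := by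
  rw [lamPoly, Polynomial.finset_sum_coeff]
  simp only [coeff_C_mul, coeff_X_pow, mul_ite, mul_one, mul_zero]
  rw [Finset.sum_ite_eq (Finset.range d) n (lamCoeff d p z), if_pos (Finset.mem_range.mpr hn)]

theorem natDegree_lamPoly_lt (hd : 1 ≤ d) (z : Fin d → ℤ) :
    (lamPoly d p z).natDegree < d := by
  have : (lamPoly d p z).natDegree ≤ d - 1 := by
    apply Polynomial.natDegree_le_iff_coeff_eq_zero.mpr
    intro m hm
    rw [lamPoly, Polynomial.finset_sum_coeff]
    apply Finset.sum_eq_zero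
    intro i hi
    rw [Finset.mem_range] at hi
    rw [coeff_C_mul, coeff_X_pow, if_neg (by omega), mul_zero]
  omega

theorem pext_d : pext d p d = p (Fin.last d) := by
  rw [pext, dif_pos (Nat.lt_succ_self d)]; rfl

include hpd in
theorem Lr_inj (hd : 1 ≤ d) (z z' : Fin d → ℤ) (h : Lr d p z = Lr d p z') : z = z' := by
  have hmk : Ideal.Quotient.mk (Ideal.span {cnsPoly d p}) (lamPoly d p z - lamPoly d p z') = 0 := by
    rw [map_sub, mk_lamPoly, mk_lamPoly, h, sub_self]
  have hdeg : (lamPoly d p z - lamPoly d p z').natDegree < d :=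
    lt_of_le_of_lt (Polynomial.natDegree_sub_le _ _)
      (max_lt (natDegree_lamPoly_lt d p hd z) (natDegree_lamPoly_lt d p hd z'))
  have hpoly := small_inj d p hpd _ hdeg hmk
  have hlam : ∀ n < d, lamCoeff d p z n = lamCoeff d p z' n := by
    intro n hn
    have := congrArg (fun f => Polynomial.coeff f n) (sub_eq_zero.mp hpoly)
    simpa [coeff_lamPoly d p _ n hn] using this
  -- downward induction
  have key : ∀ m : ℕ, m ≤ d → ∀ n : ℕ, d - m ≤ n → zext d z n = zext d z' n := by
    intro m
    induction m with
    | zero =>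
      intro _ n hn
      rw [zext, zext, dif_neg (by omega), dif_neg (by omega)]
    | succ m ih =>
      intro hm n hn
      by_cases hcase : d - m ≤ n
      · exact ih (by omega) n hcase
      · have hnval : n = d - m - 1 := by omega
        have hnd : n < d := by omega
        have hl := hlam n hnd
        rw [lamCoeff, lamCoeff, show d - n = (d - (n + 1)) + 1 by omega] at hl
        rw [Finset.sum_range_succ', Finset.sum_range_succ'] at hl
        have htail : ∀ t ∈ Finset.range (d - (n + 1)),
            pext d p (d - (t + 1)) * zext d z (n + (t + 1))
              = pext d p (d - (t + 1)) * zext d z' (n + (t + 1)) := by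
          intro t ht
          rw [ih (by omega) (n + (t + 1)) (by omega)]
        rw [Finset.sum_congr rfl htail] at hl
        have hl2 : pext d p (d - 0) * zext d z (n + 0) = pext d p (d - 0) * zext d z' (n + 0) := by
          omega
        simp only [Nat.sub_zero, Nat.add_zero] at hl2
        rw [pext_d] at hl2
        exact mul_left_cancel₀ hpd hl2
  funext j
  have := key d le_rfl (j : ℕ) (by omega)
  rw [zext, zext, dif_pos j.isLt, dif_pos j.isLt] at this
  exact this

theorem Lr_zero : Lr d p 0 = 0 := by
  rw [Lr]
  apply Finset.sum_eq_zero
  intro i _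
  have : lamCoeff d p 0 i = 0 := by
    rw [lamCoeff]
    apply Finset.sum_eq_zero
    intro t _
    rw [zext]
    split <;> simp
  rw [this, Int.cast_zero, zero_mul]

theorem digCons_sum (a : ℤ) (g : ℕ → ℤ) (n : ℕ) :
    ∑ i ∈ Finset.range (n + 1), ((digCons a g i : ℤ) : CnsRing d p) * cnsX d p ^ i
      = ((a : ℤ) : CnsRing d p) + cnsX d p * ∑ i ∈ Finset.range n,
          ((g i : ℤ) : CnsRing d p) * cnsX d p ^ i := by
  rw [Finset.sum_range_succ', Finset.mul_sum]
  simp only [digCons, pow_zero, mul_one]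
  rw [add_comm]
  congr 1
  refine Finset.sum_congr rfl fun i _ => ?_
  ring

/-- `B` has a finite digit expansion. -/
def hasExp (B : CnsRing d p) : Prop :=
  ∃ (ℓ : ℕ) (b : ℕ → ℤ),
    (∀ i ≤ ℓ, 0 ≤ b i ∧ b i < p 0) ∧
    B = ∑ i ∈ Finset.range (ℓ + 1), ((b i : ℤ) : CnsRing d p) * cnsX d p ^ i

end CnsSrs

open CnsSrs

/-- `P` is a CNS polynomial with digit set `{0,…,p_0-1}` if and only if
`r = (p_d/p_0, …, p_1/p_0) ∈ D_d^{(0)}`. -/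
theorem cns_iff_srs_finiteness (d : ℕ) (hd : 1 ≤ d) (p : Fin (d + 1) → ℤ)
    (hp0 : 2 ≤ p 0) (hpd : p (Fin.last d) ≠ 0)
    (r : Fin d → ℝ)
    (hr : ∀ j : Fin d, r j = (p ⟨d - (j : ℕ), by omega⟩ : ℝ) / (p 0 : ℝ)) :
    (∀ B : CnsRing d p, ∃ (ℓ : ℕ) (b : ℕ → ℤ),
        (∀ i ≤ ℓ, 0 ≤ b i ∧ b i < p 0) ∧
        B = ∑ i ∈ Finset.range (ℓ + 1), ((b i : ℤ) : CnsRing d p) * cnsX d p ^ i)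
      ↔ (∀ z : Fin d → ℤ, ∃ k : ℕ, (srsMap d r)^[k] z = 0) := by
  have hstep0 : ∀ z : Fin d → ℤ, Lr d p z
      = ((lamCoeff d p z 0 % p 0 : ℤ) : CnsRing d p)
        + cnsX d p * Lr d p (srsMap d r z) := by
    intro z
    have hstep := genstep d p 0 z
    simp only [Int.cast_zero, zero_add] at hstep
    rw [← srs_eq_sigma d p hp0 r hr z] at hstep
    exact hstep
  have hd1 : ∀ z : Fin d → ℤ, 0 ≤ lamCoeff d p z 0 % p 0 :=
    fun z => Int.emod_nonneg _ (by omega)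
  have hd2 : ∀ z : Fin d → ℤ, lamCoeff d p z 0 % p 0 < p 0 :=
    fun z => Int.emod_lt_of_pos _ (by omega)
  constructor
  · intro H z
    have key : ∀ ℓ : ℕ, ∀ (z : Fin d → ℤ) (b : ℕ → ℤ),
        (∀ i ≤ ℓ, 0 ≤ b i ∧ b i < p 0) →
        Lr d p z = ∑ i ∈ Finset.range (ℓ + 1), ((b i : ℤ) : CnsRing d p) * cnsX d p ^ i →
        (srsMap d r)^[ℓ + 1] z = 0 := by
      intro ℓ
      induction ℓ with
      | zero =>
        intro z b hb hEq
        have hEq' : ((lamCoeff d p z 0 % p 0 : ℤ) : CnsRing d p)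
            + cnsX d p * Lr d p (srsMap d r z)
            = ((b 0 : ℤ) : CnsRing d p) + cnsX d p * 0 := by
          rw [← hstep0 z, hEq, Finset.sum_range_one, pow_zero, mul_one, mul_zero, add_zero]
        obtain ⟨-, h2⟩ := digit_unique d p hp0 _ _ _ _ (hd1 z) (hd2 z)
          (hb 0 le_rfl).1 (hb 0 le_rfl).2 hEq'
        have h3 : srsMap d r z = 0 := Lr_inj d p hpd hd _ 0 (by rw [h2, Lr_zero])
        simpa using h3
      | succ n ih =>
        intro z b hb hEq
        have hcast : ∀ i ∈ Finset.range (n + 2),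
            ((b i : ℤ) : CnsRing d p) * cnsX d p ^ i
              = ((digCons (b 0) (fun j => b (j + 1)) i : ℤ) : CnsRing d p) * cnsX d p ^ i := by
          intro i _
          cases i <;> rfl
        rw [Finset.sum_congr rfl hcast, digCons_sum] at hEq
        have hEq' : ((lamCoeff d p z 0 % p 0 : ℤ) : CnsRing d p)
            + cnsX d p * Lr d p (srsMap d r z)
            = ((b 0 : ℤ) : CnsRing d p) + cnsX d p
              * ∑ i ∈ Finset.range (n + 1), ((b (i + 1) : ℤ) : CnsRing d p) * cnsX d p ^ i := by
          rw [← hstep0 z, hEq]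
        obtain ⟨-, h2⟩ := digit_unique d p hp0 _ _ _ _ (hd1 z) (hd2 z)
          (hb 0 (by omega)).1 (hb 0 (by omega)).2 hEq'
        have h3 := ih (srsMap d r z) (fun i => b (i + 1))
          (fun i hi => hb (i + 1) (by omega)) h2
        rw [Function.iterate_succ_apply]
        exact h3
    obtain ⟨ℓ, b, hb, hEq⟩ := H (Lr d p z)
    exact ⟨ℓ + 1, key ℓ z b hb hEq⟩
  · intro F B
    have cons : ∀ (e : ℤ) (B : CnsRing d p), 0 ≤ e → e < p 0 → hasExp d p B →
        hasExp d p (((e : ℤ) : CnsRing d p) + cnsX d p * B) := by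
      rintro e B he1 he2 ⟨ℓ, b, hb, rfl⟩
      refine ⟨ℓ + 1, digCons e b, ?_, (digCons_sum d p e b (ℓ + 1)).symm⟩
      intro i hi
      cases i with
      | zero => exact ⟨he1, he2⟩
      | succ i => exact hb i (by omega)
    have expL : ∀ (k : ℕ) (z : Fin d → ℤ), (srsMap d r)^[k] z = 0 → hasExp d p (Lr d p z) := by
      intro k
      induction k with
      | zero =>
        intro z hz
        simp only [Function.iterate_zero, id_eq] at hz
        subst hz
        rw [Lr_zero]
        exact ⟨0, fun _ => 0, fun i _ => by change 0 ≤ 0 ∧ 0 < p 0; omega, by simp⟩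
      | succ k ih =>
        intro z hz
        rw [hstep0 z]
        exact cons _ _ (hd1 z) (hd2 z)
          (ih (srsMap d r z) (by rwa [← Function.iterate_succ_apply]))
    have expPre : ∀ (k : ℕ) (e : ℕ → ℤ) (z : Fin d → ℤ),
        (∀ i < k, 0 ≤ e i ∧ e i < p 0) →
        hasExp d p ((∑ i ∈ Finset.range k, ((e i : ℤ) : CnsRing d p) * cnsX d p ^ i)
          + cnsX d p ^ k * Lr d p z) := by
      intro k
      induction k with
      | zero =>
        intro e z _
        simp only [Finset.range_zero, Finset.sum_empty, pow_zero, one_mul, zero_add]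
        obtain ⟨k0, hk0⟩ := F z
        exact expL k0 z hk0
      | succ k ih =>
        intro e z he
        have h1 : ∀ i ∈ Finset.range (k + 1),
            ((e i : ℤ) : CnsRing d p) * cnsX d p ^ i
              = ((digCons (e 0) (fun j => e (j + 1)) i : ℤ) : CnsRing d p) * cnsX d p ^ i := by
          intro i _
          cases i <;> rfl
        have goalEq : (∑ i ∈ Finset.range (k + 1), ((e i : ℤ) : CnsRing d p) * cnsX d p ^ i)
            + cnsX d p ^ (k + 1) * Lr d p z
            = ((e 0 : ℤ) : CnsRing d p) + cnsX d p
              * ((∑ i ∈ Finset.range k, ((e (i + 1) : ℤ) : CnsRing d p) * cnsX d p ^ i)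
                + cnsX d p ^ k * Lr d p z) := by
          rw [Finset.sum_congr rfl h1, digCons_sum]
          ring
        rw [goalEq]
        exact cons _ _ (he 0 (by omega)).1 (he 0 (by omega)).2
          (ih (fun i => e (i + 1)) z (fun i hi => he (i + 1) (by omega)))
    have claimF : ∀ (m : ℕ) (c : ℕ → ℤ) (w : Fin d → ℤ),
        ∃ (k : ℕ) (e : ℕ → ℤ) (z : Fin d → ℤ),
          (∀ i < k, 0 ≤ e i ∧ e i < p 0) ∧
          (∑ i ∈ Finset.range m, ((c i : ℤ) : CnsRing d p) * cnsX d p ^ i) + Lr d p w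
            = (∑ i ∈ Finset.range k, ((e i : ℤ) : CnsRing d p) * cnsX d p ^ i)
              + cnsX d p ^ k * Lr d p z := by
      intro m
      induction m with
      | zero =>
        intro c w
        exact ⟨0, fun _ => 0, w, fun i hi => by omega, by simp⟩
      | succ m ih =>
        intro c w
        obtain ⟨k, e, z, hke, hEq⟩ := ih (fun i => c (i + 1))
          (sigmaMap d ((c 0 + lamCoeff d p w 0) / p 0) w)
        refine ⟨k + 1, digCons ((c 0 + lamCoeff d p w 0) % p 0) e, z, ?_, ?_⟩
        · intro i hi
          cases i with
          | zero => exact ⟨Int.emod_nonneg _ (by omega), Int.emod_lt_of_pos _ (by omega)⟩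
          | succ i => exact hke i (by omega)
        · have h1 : ∑ i ∈ Finset.range (m + 1), ((c i : ℤ) : CnsRing d p) * cnsX d p ^ i
              = ((c 0 : ℤ) : CnsRing d p) + cnsX d p
                * ∑ i ∈ Finset.range m, ((c (i + 1) : ℤ) : CnsRing d p) * cnsX d p ^ i := by
            have hc : ∀ i ∈ Finset.range (m + 1),
                ((c i : ℤ) : CnsRing d p) * cnsX d p ^ i
                  = ((digCons (c 0) (fun j => c (j + 1)) i : ℤ) : CnsRing d p)
                    * cnsX d p ^ i := by
              intro i _
              cases i <;> rfl
            rw [Finset.sum_congr rfl hc, digCons_sum]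
          have hstep := genstep d p (c 0) w
          linear_combination h1 + hstep + cnsX d p * hEq
            - digCons_sum d p ((c 0 + lamCoeff d p w 0) % p 0) e k
    obtain ⟨f, rfl⟩ := Ideal.Quotient.mk_surjective B
    have hf : Ideal.Quotient.mk (Ideal.span {cnsPoly d p}) f
        = ∑ i ∈ Finset.range (f.natDegree + 1),
            ((f.coeff i : ℤ) : CnsRing d p) * cnsX d p ^ i := by
      conv_lhs => rw [Polynomial.as_sum_range_C_mul_X_pow f]
      rw [map_sum]
      refine Finset.sum_congr rfl fun i _ => ?_
      rw [map_mul, map_pow, mk_C]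
      rfl
    obtain ⟨k, e, z, hke, hEq⟩ := claimF (f.natDegree + 1) f.coeff 0
    rw [Lr_zero, add_zero] at hEq
    show hasExp d p _
    rw [hf, hEq]
    exact expPre k e z hke
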